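/- Let G be the n-sunlet graph on 2n vertices, with n ≥ 4: a cycle v_1, …, v_n (v_i adjacent to v_{i+1}, indices modulo n) together with pendant vertices w_1, …, w_n, where w_i is adjacent only to v_i. Then for every integer r with 1 ≤ r < ⌊n/2⌋, the clique number of the r-th power is ω(G^r) = 2r; and for every integer r ≥ ⌊n/2⌋ + 2, G^r is the complete graph on 2n vertices, so ω(G^r) = 2n. -/

import Mathlib

/-- The `r`-th power of a simple graph `G`: two distinct vertices are adjacent
iff their distance in `G` is at most `r` (in particular they are connected in `G`). -/
def SimpleGraph.power {V : Type*} (G : SimpleGraph V) (r : ℕ) : SimpleGraph V :=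
  SimpleGraph.fromRel (fun u v => G.Reachable u v ∧ G.dist u v ≤ r)

/-- The `n`-sunlet graph on `2n` vertices: a cycle on the vertices `Sum.inl i`
(`v_i` adjacent to `v_{i+1}`, indices mod `n`) together with pendant vertices
`Sum.inr i`, where `w_i` is adjacent only to `v_i`. -/
def sunletGraph (n : ℕ) : SimpleGraph (ZMod n ⊕ ZMod n) :=
  SimpleGraph.fromRel (fun a b =>
    match a, b with
    | Sum.inl i, Sum.inl j => j = i + 1
    | Sum.inr i, Sum.inl j => j = i
    | _, _ => False)

namespace SunletAux
open SimpleGraph Sum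

variable {n : ℕ}

/-- circular distance -/
def cd (i j : ZMod n) : ℕ := min (j - i).val (i - j).val

def D : (ZMod n ⊕ ZMod n) → (ZMod n ⊕ ZMod n) → ℕ
  | inl i, inl j => cd i j
  | inl i, inr j => cd i j + 1
  | inr i, inl j => cd i j + 1
  | inr i, inr j => if i = j then 0 else cd i j + 2

lemma cd_self (i : ZMod n) : cd i i = 0 := by simp [cd]

lemma cd_comm (i j : ZMod n) : cd i j = cd j i := by simp [cd, min_comm]

lemma cd_eq_zero [NeZero n] {i j : ZMod n} (h : cd i j = 0) : i = j := by
  rcases Nat.min_eq_zero_iff.mp h with h' | h' <;>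
    rw [ZMod.val_eq_zero, sub_eq_zero] at h'
  exacts [h'.symm, h']

end SunletAux

namespace SunletAux
open SimpleGraph Sum
variable {n : ℕ}

def f (x : ZMod n) : ℕ := min x.val (-x).val

lemma cd_eq_f (i j : ZMod n) : cd i j = f (j - i) := by
  simp [cd, f, neg_sub]

lemma f_neg (x : ZMod n) : f (-x) = f x := by simp [f, min_comm]

lemma f_add_one [NeZero n] (x : ZMod n) : f (x + 1) ≤ f x + 1 := by
  rcases eq_or_ne x 0 with rfl | hx
  · have h1 : ((0 : ZMod n) + 1).val ≤ 1 := by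
      rw [zero_add, show (1 : ZMod n) = ((1:ℕ) : ZMod n) by push_cast; ring, ZMod.val_natCast]
      exact Nat.le_of_lt_succ (Nat.lt_succ_of_le (Nat.mod_le _ _))
    calc f (0 + 1) ≤ ((0:ZMod n) + 1).val := min_le_left _ _
      _ ≤ 1 := h1
      _ = f 0 + 1 := by simp [f]
  · rcases le_total x.val (-x).val with h | h
    · have h1 : (x + 1).val ≤ x.val + 1 := by
        have : x + 1 = ((x.val + 1 : ℕ) : ZMod n) := by
          push_cast [ZMod.natCast_val, ZMod.cast_id]
          ring
        rw [this, ZMod.val_natCast]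
        exact Nat.mod_le _ _
      calc f (x+1) ≤ (x+1).val := min_le_left _ _
        _ ≤ x.val + 1 := h1
        _ = f x + 1 := by simp [f, min_eq_left h]
    · have hnx : (-x) ≠ 0 := by simpa using hx
      have hv : 1 ≤ (-x).val := Nat.one_le_iff_ne_zero.mpr (by simpa [ZMod.val_eq_zero] using hnx)
      have h1 : (-(x + 1)).val = (-x).val - 1 := by
        have e : -(x+1) = (((-x).val - 1 : ℕ) : ZMod n) := by
          push_cast [Nat.cast_sub hv, ZMod.natCast_val, ZMod.cast_id]
          ring
        rw [e, ZMod.val_natCast, Nat.mod_eq_of_lt (by have := ZMod.val_lt (-x); omega)]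
      calc f (x+1) ≤ (-(x+1)).val := min_le_right _ _
        _ ≤ f x + 1 := by rw [h1]; simp [f, min_eq_right h]; omega
  
lemma f_sub_one [NeZero n] (x : ZMod n) : f (x - 1) ≤ f x + 1 := by
  have := f_add_one (-x)
  rw [f_neg] at this
  calc f (x - 1) = f (-(x-1)) := (f_neg _).symm
    _ = f (-x + 1) := by ring_nf
    _ ≤ f x + 1 := this

lemma cd_step1 [NeZero n] (i j : ZMod n) : cd (i+1) j ≤ cd i j + 1 := by
  rw [cd_eq_f, cd_eq_f, show j - (i+1) = (j - i) - 1 by ring]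
  exact f_sub_one _

lemma cd_step2 [NeZero n] (i j : ZMod n) : cd i j ≤ cd (i+1) j + 1 := by
  rw [cd_eq_f, cd_eq_f, show j - i = (j - (i+1)) + 1 by ring]
  exact f_add_one _

lemma cd_le_half [NeZero n] (i j : ZMod n) : cd i j ≤ n / 2 := by
  rcases eq_or_ne i j with rfl | h
  · simp [cd_self]
  · have h' : j - i ≠ 0 := sub_ne_zero.mpr (Ne.symm h)
    have h1 : (i - j) = -(j - i) := by ring
    have h2 : (i - j).val = n - (j - i).val := by
      rw [h1, ZMod.neg_val, if_neg h']
    have h3 : (j - i).val ≠ 0 := by simpa [ZMod.val_eq_zero] using h'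
    have h4 := ZMod.val_lt (j - i)
    simp only [cd]
    omega

end SunletAux

namespace SunletAux
open SimpleGraph Sum
variable {n : ℕ}

lemma one_ne_zero' (hn : 4 ≤ n) : (1 : ZMod n) ≠ 0 := by
  haveI : Fact (1 < n) := ⟨by omega⟩
  exact one_ne_zero

lemma adj_cycle (hn : 4 ≤ n) (i : ZMod n) : (sunletGraph n).Adj (inl i) (inl (i+1)) := by
  rw [sunletGraph, SimpleGraph.fromRel_adj]
  refine ⟨?_, Or.inl rfl⟩
  simp only [ne_eq, inl.injEq, left_eq_add]
  exact one_ne_zero' hn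

lemma adj_pendant (i : ZMod n) : (sunletGraph n).Adj (inr i) (inl i) := by
  rw [sunletGraph, SimpleGraph.fromRel_adj]
  exact ⟨by simp, Or.inl rfl⟩

lemma adj_cases {u v : ZMod n ⊕ ZMod n} (h : (sunletGraph n).Adj u v) :
    (∃ i, u = inl i ∧ v = inl (i+1)) ∨ (∃ i, u = inl (i+1) ∧ v = inl i) ∨
    (∃ i, u = inr i ∧ v = inl i) ∨ (∃ i, u = inl i ∧ v = inr i) := by
  rw [sunletGraph, SimpleGraph.fromRel_adj] at h
  obtain ⟨-, h | h⟩ := h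
  · cases u with
    | inl i => cases v with
      | inl j => exact Or.inl ⟨i, rfl, by simp_all⟩
      | inr j => simp at h
    | inr i => cases v with
      | inl j => exact Or.inr (Or.inr (Or.inl ⟨i, rfl, by simp_all⟩))
      | inr j => simp at h
  · cases u with
    | inl i => cases v with
      | inl j => exact Or.inr (Or.inl ⟨j, by simp_all, rfl⟩)
      | inr j => exact Or.inr (Or.inr (Or.inr ⟨i, rfl, by simp_all⟩))
    | inr i => cases v with
      | inl j => simp at h
      | inr j => simp at h

lemma D_step [NeZero n] {u u' : ZMod n ⊕ ZMod n} (h : (sunletGraph n).Adj u u')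
    (v : ZMod n ⊕ ZMod n) : D u v ≤ D u' v + 1 := by
  rcases adj_cases h with ⟨i, rfl, rfl⟩ | ⟨i, rfl, rfl⟩ | ⟨i, rfl, rfl⟩ | ⟨i, rfl, rfl⟩
  · cases v with
    | inl j => exact cd_step2 i j
    | inr j => have := cd_step2 i j; simp only [D]; omega
  · cases v with
    | inl j => exact cd_step1 i j
    | inr j => have := cd_step1 i j; simp only [D]; omega
  · cases v with
    | inl j => simp only [D]; omega
    | inr j =>
      simp only [D]
      rcases eq_or_ne i j with rfl | hij
      · simp [cd_self]
      · rw [if_neg hij]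
  · cases v with
    | inl j => simp only [D]; omega
    | inr j =>
      simp only [D]
      rcases eq_or_ne i j with rfl | hij
      · simp [cd_self]
      · rw [if_neg hij]; omega

lemma D_le_length [NeZero n] {u v : ZMod n ⊕ ZMod n} (p : (sunletGraph n).Walk u v) :
    D u v ≤ p.length := by
  induction p with
  | nil =>
    cases ‹ZMod n ⊕ ZMod n› with
    | inl i => simp [D, cd_self]
    | inr i => simp [D]
  | @cons a b c h p ih =>
    calc D a c ≤ D b c + 1 := D_step h c
      _ ≤ p.length + 1 := by omega
      _ = (SimpleGraph.Walk.cons h p).length := (SimpleGraph.Walk.length_cons h p).symm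

lemma D_le_dist [NeZero n] {u v : ZMod n ⊕ ZMod n} (h : (sunletGraph n).Reachable u v) :
    D u v ≤ (sunletGraph n).dist u v := by
  obtain ⟨p, hp⟩ := h.exists_walk_length_eq_dist
  exact hp ▸ D_le_length p

end SunletAux

namespace SunletAux
open SimpleGraph Sum
variable {n : ℕ}

lemma exists_walk_cycle (hn : 4 ≤ n) (k : ℕ) : ∀ (i : ZMod n),
    ∃ p : (sunletGraph n).Walk (inl i) (inl (i + (k : ZMod n))), p.length = k := by
  induction k with
  | zero => intro i; exact ⟨(SimpleGraph.Walk.nil).copy rfl (by simp), by simp⟩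
  | succ k ih =>
    intro i
    obtain ⟨p, hp⟩ := ih (i + 1)
    refine ⟨(SimpleGraph.Walk.cons (adj_cycle hn i) p).copy rfl (by push_cast; ring_nf), ?_⟩
    simp [hp]

lemma dist_inl_inl_le (hn : 4 ≤ n) (i j : ZMod n) :
    (sunletGraph n).dist (inl i) (inl j) ≤ cd i j := by
  haveI : NeZero n := ⟨by omega⟩
  have key : ∀ a b : ZMod n, (sunletGraph n).dist (inl a) (inl b) ≤ (b - a).val := by
    intro a b
    obtain ⟨p, hp⟩ := exists_walk_cycle hn (b - a).val a
    have e : a + (((b - a).val : ℕ) : ZMod n) = b := by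
      rw [ZMod.natCast_val, ZMod.cast_id]; ring
    calc (sunletGraph n).dist (inl a) (inl b) ≤ (p.copy rfl (by rw [e])).length :=
          SimpleGraph.dist_le _
      _ = (b - a).val := by simpa using hp
  have h1 := key i j
  have h2 := key j i
  rw [SimpleGraph.dist_comm] at h2
  simp only [cd]
  omega

lemma reachable_inl_inl (hn : 4 ≤ n) (i j : ZMod n) :
    (sunletGraph n).Reachable (inl i) (inl j) := by
  haveI : NeZero n := ⟨by omega⟩
  obtain ⟨p, -⟩ := exists_walk_cycle hn (j - i).val i
  have e : i + (((j - i).val : ℕ) : ZMod n) = j := by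
    rw [ZMod.natCast_val, ZMod.cast_id]; ring
  exact ⟨p.copy rfl (by rw [e])⟩

lemma reachable_all (hn : 4 ≤ n) (u v : ZMod n ⊕ ZMod n) :
    (sunletGraph n).Reachable u v := by
  have base : ∀ w : ZMod n ⊕ ZMod n, ∃ i, (sunletGraph n).Reachable w (inl i) := by
    intro w
    cases w with
    | inl i => exact ⟨i, Reachable.refl _⟩
    | inr i => exact ⟨i, (adj_pendant i).reachable⟩
  obtain ⟨i, hi⟩ := base u
  obtain ⟨j, hj⟩ := base v
  exact (hi.trans (reachable_inl_inl hn i j)).trans hj.symm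

lemma dist_le_D (hn : 4 ≤ n) (u v : ZMod n ⊕ ZMod n) :
    (sunletGraph n).dist u v ≤ D u v := by
  haveI : NeZero n := ⟨by omega⟩
  have tri : ∀ a b c : ZMod n ⊕ ZMod n, (sunletGraph n).dist a c ≤
      (sunletGraph n).dist a b + (sunletGraph n).dist b c := by
    intro a b c
    obtain ⟨p, hp⟩ := (reachable_all hn a b).exists_walk_length_eq_dist
    obtain ⟨q, hq⟩ := (reachable_all hn b c).exists_walk_length_eq_dist
    calc (sunletGraph n).dist a c ≤ (p.append q).length := SimpleGraph.dist_le _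
      _ = p.length + q.length := SimpleGraph.Walk.length_append _ _
      _ = _ := by rw [hp, hq]
  have pend : ∀ i : ZMod n, (sunletGraph n).dist (inr i) (inl i) ≤ 1 :=
    fun i => SimpleGraph.dist_le ((adj_pendant i).toWalk) |>.trans (by simp)
  have pend' : ∀ i : ZMod n, (sunletGraph n).dist (inl i) (inr i) ≤ 1 := by
    intro i; rw [SimpleGraph.dist_comm]; exact pend i
  cases u with
  | inl i => cases v with
    | inl j => exact dist_inl_inl_le hn i j
    | inr j =>
      calc (sunletGraph n).dist (inl i) (inr j) ≤ _ + _ := tri _ (inl j) _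
        _ ≤ cd i j + 1 := by
            have := dist_inl_inl_le hn i j; have := pend' j; omega
        _ = D (inl i) (inr j) := rfl
  | inr i => cases v with
    | inl j =>
      calc (sunletGraph n).dist (inr i) (inl j) ≤ _ + _ := tri _ (inl i) _
        _ ≤ 1 + cd i j := by
            have := dist_inl_inl_le hn i j; have := pend i; omega
        _ = D (inr i) (inl j) := by simp only [D]; omega
    | inr j =>
      rcases eq_or_ne i j with rfl | hij
      · simp [D]
      · calc (sunletGraph n).dist (inr i) (inr j) ≤ _ + _ := tri _ (inl i) _
          _ ≤ 1 + ((sunletGraph n).dist (inl i) (inl j) + (sunletGraph n).dist (inl j) (inr j)) := by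
              have := tri (inl i : ZMod n ⊕ ZMod n) (inl j) (inr j)
              have := pend i; omega
          _ ≤ 1 + (cd i j + 1) := by
              have := dist_inl_inl_le hn i j; have := pend' j; omega
          _ = D (inr i) (inr j) := by simp only [D, if_neg hij]; omega

end SunletAux

namespace SunletAux
open SimpleGraph Sum
variable {n : ℕ}

lemma val_inj' [NeZero n] {a b : ZMod n} (h : a.val = b.val) : a = b := by
  have h1 : ((a.val : ℕ) : ZMod n) = ((b.val : ℕ) : ZMod n) := by rw [h]
  rwa [ZMod.natCast_val, ZMod.natCast_val, ZMod.cast_id, ZMod.cast_id] at h1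

lemma val_sub_injective [NeZero n] {x y z : ZMod n} (h : (y - x).val = (z - x).val) : y = z :=
  sub_left_inj.mp (val_inj' h)

lemma arc_lemma [NeZero n] {d : ℕ} (hd : 2 * d + 2 ≤ n) (S : Finset (ZMod n))
    (h : ∀ i ∈ S, ∀ j ∈ S, i ≠ j → cd i j ≤ d) : S.card ≤ d + 1 := by
  rcases S.eq_empty_or_nonempty with rfl | ⟨x, hx⟩
  · simp
  have key : (S.erase x).card ≤ (Finset.Icc 1 d).card := by
    apply Finset.card_le_card_of_injOn
      (fun y => if (y - x).val ≤ d then (y - x).val else d + 1 - (x - y).val)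
    · intro y hy
      have hyS := Finset.mem_of_mem_erase hy
      have hyx : y ≠ x := Finset.ne_of_mem_erase hy
      have hcd : cd x y ≤ d := h x hx y hyS (Ne.symm hyx)
      have ha : (y - x).val ≠ 0 := by
        simpa [ZMod.val_eq_zero, sub_eq_zero] using hyx
      have hb : (x - y).val ≠ 0 := by
        simpa [ZMod.val_eq_zero, sub_eq_zero] using hyx.symm
      simp only [cd] at hcd
      simp only [Finset.mem_coe, Finset.mem_Icc]
      split_ifs with hc
      · omega
      · omega
    · intro y hy z hz hyz
      have hyS := Finset.mem_of_mem_erase hy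
      have hyx : y ≠ x := Finset.ne_of_mem_erase hy
      have hzS := Finset.mem_of_mem_erase hz
      have hzx : z ≠ x := Finset.ne_of_mem_erase hz
      have hay : (y - x).val ≠ 0 := by simpa [ZMod.val_eq_zero, sub_eq_zero] using hyx
      have haz : (z - x).val ≠ 0 := by simpa [ZMod.val_eq_zero, sub_eq_zero] using hzx
      have hby : (x - y).val ≠ 0 := by simpa [ZMod.val_eq_zero, sub_eq_zero] using hyx.symm
      have hbz : (x - z).val ≠ 0 := by simpa [ZMod.val_eq_zero, sub_eq_zero] using hzx.symm
      have hcy : cd x y ≤ d := h x hx y hyS (Ne.symm hyx)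
      have hcz : cd x z ≤ d := h x hx z hzS (Ne.symm hzx)
      simp only [cd] at hcy hcz
      -- cross case helper
      have cross : ∀ a b : ZMod n, a ∈ S → b ∈ S →
          (a - x).val ≤ d → ¬ (b - x).val ≤ d → (a - x).val = d + 1 - (x - b).val →
          (x - b).val ≠ 0 → False := by
        intro a b haS hbS h1 h2 h3 h4
        have hxb : (x - b).val ≤ d := by
          have : cd x b ≤ d := h x hx b hbS (by
            intro e; apply h2; rw [← e]; simp)
          simp only [cd] at this
          omega
        have hab : a ≠ b := by
          intro e; subst e; omega
        have hsum : (a - x).val + (x - b).val = d + 1 := by omega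
        have e1 : a - b = (((d + 1 : ℕ)) : ZMod n) := by
          rw [← hsum]
          push_cast [ZMod.natCast_val, ZMod.cast_id]
          ring
        have e2 : (a - b).val = d + 1 := by
          rw [e1, ZMod.val_natCast, Nat.mod_eq_of_lt (by omega)]
        have e3 : (b - a).val = n - (d + 1) := by
          have hne : a - b ≠ 0 := by
            rw [e1]; intro e
            have := congrArg ZMod.val e
            rw [ZMod.val_natCast, Nat.mod_eq_of_lt (by omega), ZMod.val_zero] at this
            omega
          have : b - a = -(a - b) := by ring
          rw [this, ZMod.neg_val, if_neg hne, e2]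
        have := h a haS b hbS hab
        simp only [cd] at this
        omega
      simp only at hyz
      split_ifs at hyz with h1 h2 h2
      · exact val_sub_injective hyz
      · exact absurd (cross y z hyS hzS h1 h2 hyz hbz) not_false
      · exact absurd (cross z y hzS hyS h2 h1 hyz.symm hby) not_false
      · have hval : (x - y).val = (x - z).val := by omega
        exact sub_right_inj.mp (val_inj' hval)
  have hcard := Finset.card_erase_of_mem hx
  rw [Nat.card_Icc] at key
  omega

end SunletAux

namespace SunletAux
open SimpleGraph Sum
variable {n : ℕ}

lemma power_adj {V : Type*} (G : SimpleGraph V) (r : ℕ) (u v : V) :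
    (G.power r).Adj u v ↔ u ≠ v ∧ G.Reachable u v ∧ G.dist u v ≤ r := by
  rw [SimpleGraph.power, SimpleGraph.fromRel_adj]
  constructor
  · rintro ⟨hne, ⟨h1, h2⟩ | ⟨h1, h2⟩⟩
    · exact ⟨hne, h1, h2⟩
    · exact ⟨hne, h1.symm, by rwa [SimpleGraph.dist_comm]⟩
  · rintro ⟨hne, h1, h2⟩
    exact ⟨hne, Or.inl ⟨h1, h2⟩⟩

lemma cd_natCast (hn : 4 ≤ n) {a b : ℕ} (hab : a ≤ b) (hb : b < n) :
    cd ((a : ZMod n)) ((b : ZMod n)) ≤ b - a := by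
  haveI : NeZero n := ⟨by omega⟩
  have e : ((b : ZMod n)) - ((a : ZMod n)) = (((b - a : ℕ)) : ZMod n) := by
    push_cast [Nat.cast_sub hab]
    ring
  calc cd ((a : ZMod n)) ((b : ZMod n)) ≤ ((b : ZMod n) - (a : ZMod n)).val := min_le_left _ _
    _ = (b - a) % n := by rw [e, ZMod.val_natCast]
    _ ≤ b - a := Nat.mod_le _ _

lemma cd_natCast' (hn : 4 ≤ n) {a b : ℕ} (ha : a < n) (hb : b < n) :
    cd ((a : ZMod n)) ((b : ZMod n)) ≤ max a b - min a b := by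
  rcases le_total a b with hab | hab
  · have := cd_natCast hn hab hb
    rw [max_eq_right hab, min_eq_left hab]
    omega
  · have := cd_natCast hn hab ha
    rw [cd_comm, max_eq_left hab, min_eq_right hab]
    omega

end SunletAux

namespace SunletAux
open SimpleGraph Sum
variable {n : ℕ}

lemma natCast_injOn (hn : 4 ≤ n) {a b : ℕ} (ha : a < n) (hb : b < n)
    (h : ((a : ℕ) : ZMod n) = ((b : ℕ) : ZMod n)) : a = b := by
  haveI : NeZero n := ⟨by omega⟩
  rw [← ZMod.val_cast_of_lt ha, ← ZMod.val_cast_of_lt hb, h]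

end SunletAux

open SunletAux Sum

/-- For the `n`-sunlet graph `G` (`n ≥ 4`): for `1 ≤ r < ⌊n/2⌋` the clique number
of `G^r` is `2r`, and for every `r ≥ ⌊n/2⌋ + 2` the power `G^r` is the complete
graph on the `2n` vertices, so its clique number is `2n`. -/
theorem cliqueNum_power_sunletGraph (n : ℕ) (hn : 4 ≤ n) :
    (∀ r : ℕ, 1 ≤ r → r < n / 2 → ((sunletGraph n).power r).cliqueNum = 2 * r) ∧
      (∀ r : ℕ, n / 2 + 2 ≤ r →
        (sunletGraph n).power r = ⊤ ∧ ((sunletGraph n).power r).cliqueNum = 2 * n) := by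
  haveI : NeZero n := ⟨by omega⟩
  constructor
  · intro r hr1 hr2
    have hn2 : 2 * r + 2 ≤ n := by omega
    apply le_antisymm
    · -- upper bound
      obtain ⟨s, hs⟩ := SimpleGraph.exists_isNClique_cliqueNum (G := (sunletGraph n).power r)
      rw [← hs.card_eq]
      have key : ∀ u ∈ s, ∀ v ∈ s, u ≠ v → D u v ≤ r := by
        intro u hu v hv huv
        have h := hs.isClique hu hv huv
        rw [power_adj] at h
        exact le_trans (D_le_dist h.2.1) h.2.2
      have hS : s.toLeft.card ≤ r + 1 := by
        apply arc_lemma hn2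
        intro i hi j hj hij
        rw [Finset.mem_toLeft] at hi hj
        have := key _ hi _ hj (by simp [hij])
        simpa [D] using this
      have hsum := Finset.card_toLeft_add_card_toRight (u := s)
      rcases Nat.lt_or_ge r 2 with hrlt | hrge
      · -- r = 1
        have hre : r = 1 := by omega
        subst hre
        have hT1 : s.toRight.card ≤ 1 := by
          rw [Finset.card_le_one]
          intro i hi j hj
          by_contra hij
          rw [Finset.mem_toRight] at hi hj
          have := key _ hi _ hj (by simp [hij])
          simp only [D, if_neg hij] at this
          omega
        rcases Finset.eq_empty_or_nonempty s.toRight with he | ⟨j, hj⟩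
        · rw [he] at hsum
          simp at hsum
          omega
        · have hS1 : s.toLeft.card ≤ 1 := by
            rw [Finset.card_le_one]
            intro i hi i' hi'
            rw [Finset.mem_toLeft] at hi hi'
            rw [Finset.mem_toRight] at hj
            have c1 : i = j := by
              have := key _ hi _ hj (by simp)
              simp only [D] at this
              exact cd_eq_zero (by omega)
            have c2 : i' = j := by
              have := key _ hi' _ hj (by simp)
              simp only [D] at this
              exact cd_eq_zero (by omega)
            rw [c1, c2]
          omega
      · have hT : s.toRight.card ≤ r - 1 := by
          have h2 : 2 * (r - 2) + 2 ≤ n := by omega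
          have := arc_lemma h2 s.toRight (by
            intro i hi j hj hij
            rw [Finset.mem_toRight] at hi hj
            have := key _ hi _ hj (by simp [hij])
            simp only [D, if_neg hij] at this
            omega)
          omega
        omega
    · -- lower bound : explicit clique of size 2r
      set K : Finset (ZMod n ⊕ ZMod n) :=
        (Finset.range (r+1)).image (fun a => (inl ((a : ℕ) : ZMod n) : ZMod n ⊕ ZMod n)) ∪
        (Finset.Icc 1 (r-1)).image (fun a => (inr ((a : ℕ) : ZMod n) : ZMod n ⊕ ZMod n)) with hK
      have hclique : ((sunletGraph n).power r).IsClique K := by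
        intro u hu v hv huv
        rw [power_adj]
        refine ⟨huv, reachable_all hn u v, ?_⟩
        have hdd := dist_le_D hn u v
        simp only [hK, Finset.coe_union, Set.mem_union, Finset.coe_image, Set.mem_image,
          Finset.mem_coe, Finset.mem_range, Finset.mem_Icc] at hu hv
        have hb : ∀ a b : ℕ, a < n → b < n → cd ((a:ℕ) : ZMod n) ((b:ℕ) : ZMod n) ≤
            max a b - min a b := fun a b ha hb' => cd_natCast' hn ha hb'
        rcases hu with ⟨a, ha, rfl⟩ | ⟨a, ha, rfl⟩ <;> rcases hv with ⟨b, hbm, rfl⟩ | ⟨b, hbm, rfl⟩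
        · have := hb a b (by omega) (by omega)
          simp only [D] at hdd
          omega
        · have := hb a b (by omega) (by omega)
          simp only [D] at hdd
          omega
        · have := hb a b (by omega) (by omega)
          simp only [D] at hdd
          omega
        · have hne : ((a:ℕ) : ZMod n) ≠ ((b:ℕ) : ZMod n) := by
            intro e; exact huv (by rw [e])
          have := hb a b (by omega) (by omega)
          simp only [D, if_neg hne] at hdd
          omega
      have hcard : K.card = 2 * r := by
        rw [hK, Finset.card_union_of_disjoint (by simp [Finset.disjoint_left])]
        rw [Finset.card_image_of_injOn (fun a ha b hb h => by
              simp only [Finset.mem_coe, Finset.mem_range] at ha hb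
              exact natCast_injOn hn (by omega) (by omega) (by simpa using h)),
            Finset.card_image_of_injOn (fun a ha b hb h => by
              simp only [Finset.mem_coe, Finset.mem_Icc] at ha hb
              exact natCast_injOn hn (by omega) (by omega) (by simpa using h))]
        rw [Finset.card_range, Nat.card_Icc]
        omega
      have := SimpleGraph.IsClique.card_le_cliqueNum (tc := hclique)
      omega
  · intro r hr
    have htop : (sunletGraph n).power r = ⊤ := by
      ext u v
      rw [power_adj, SimpleGraph.top_adj]
      constructor
      · exact fun h => h.1
      · intro hne
        refine ⟨hne, reachable_all hn u v, ?_⟩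
        have h1 := dist_le_D hn u v
        have h2 : D u v ≤ n / 2 + 2 := by
          cases u with
          | inl i => cases v with
            | inl j => have := cd_le_half i j; simp only [D]; omega
            | inr j => have := cd_le_half i j; simp only [D]; omega
          | inr i => cases v with
            | inl j => have := cd_le_half i j; simp only [D]; omega
            | inr j => have := cd_le_half i j; simp only [D]; split_ifs <;> omega
        omega
    refine ⟨htop, ?_⟩
    rw [htop]
    have hcard : Fintype.card (ZMod n ⊕ ZMod n) = 2 * n := by
      rw [Fintype.card_sum, ZMod.card]
      ring
    apply le_antisymm
    · obtain ⟨s, hs⟩ :=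
        SimpleGraph.exists_isNClique_cliqueNum (G := (⊤ : SimpleGraph (ZMod n ⊕ ZMod n)))
      rw [← hs.card_eq]
      calc s.card ≤ Fintype.card (ZMod n ⊕ ZMod n) := Finset.card_le_univ s
        _ = 2 * n := hcard
    · have huniv : (⊤ : SimpleGraph (ZMod n ⊕ ZMod n)).IsClique
          (Finset.univ : Finset (ZMod n ⊕ ZMod n)) := by
        intro u _ v _ huv
        simpa [SimpleGraph.top_adj] using huv
      have := SimpleGraph.IsClique.card_le_cliqueNum (tc := huniv)
      rw [Finset.card_univ, hcard] at this
      exact this
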